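/- arXiv:2010.07296 — 3 statements merged into one kernel-verified Lean document; each statement's English description precedes it below -/
import Mathlib

section
/- Let Γ be a self-adjoint unitary on a Hilbert space H and define η_Γ(a) = a₊ + iΓa₋ for a ∈ B(H), where a± are the even and odd parts of a under ad_Γ. Then η_Γ is a *-automorphism of B(H), with inverse given by η_Γ⁻¹(a) = a₊ - iΓa₋. -/
/-- The even part of `a ∈ B(H)` with respect to the grading `ad_Γ`. -/
noncomputable def evenPart {H : Type*} [NormedAddCommGroup H] [InnerProductSpace ℂ H]
    [CompleteSpace H] (Γ a : H →L[ℂ] H) : H →L[ℂ] H :=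
  (2 : ℂ)⁻¹ • (a + Γ * a * Γ)

/-- The odd part of `a ∈ B(H)` with respect to the grading `ad_Γ`. -/
noncomputable def oddPart {H : Type*} [NormedAddCommGroup H] [InnerProductSpace ℂ H]
    [CompleteSpace H] (Γ a : H →L[ℂ] H) : H →L[ℂ] H :=
  (2 : ℂ)⁻¹ • (a - Γ * a * Γ)

/-- The twist map `η_Γ(a) = a₊ + i Γ a₋`. -/
noncomputable def eta {H : Type*} [NormedAddCommGroup H] [InnerProductSpace ℂ H]
    [CompleteSpace H] (Γ a : H →L[ℂ] H) : H →L[ℂ] H :=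
  evenPart Γ a + Complex.I • (Γ * oddPart Γ a)

/-- The map `a ↦ a₊ - i Γ a₋`, which is the inverse of `η_Γ`. -/
noncomputable def etaInv {H : Type*} [NormedAddCommGroup H] [InnerProductSpace ℂ H]
    [CompleteSpace H] (Γ a : H →L[ℂ] H) : H →L[ℂ] H :=
  evenPart Γ a - Complex.I • (Γ * oddPart Γ a)

lemma eta_eq {H : Type*} [NormedAddCommGroup H] [InnerProductSpace ℂ H]
    [CompleteSpace H] (Γ : H →L[ℂ] H) (hunit : Γ * Γ = 1) (a : H →L[ℂ] H) :
    eta Γ a = (2 : ℂ)⁻¹ • ((1 + Complex.I • Γ) * a * (1 - Complex.I • Γ)) := by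
  simp only [eta, evenPart, oddPart, mul_add, add_mul, mul_sub, sub_mul, one_mul, mul_one,
    smul_mul_assoc, mul_smul_comm, smul_smul, smul_add, smul_sub, Complex.I_mul_I,
    neg_smul, one_smul, sub_neg_eq_add]
  have h : Γ * (Γ * a * Γ) = a * Γ := by
    rw [← mul_assoc, ← mul_assoc, hunit, one_mul]
  rw [h]
  module

lemma etaInv_eq {H : Type*} [NormedAddCommGroup H] [InnerProductSpace ℂ H]
    [CompleteSpace H] (Γ : H →L[ℂ] H) (hunit : Γ * Γ = 1) (a : H →L[ℂ] H) :
    etaInv Γ a = (2 : ℂ)⁻¹ • ((1 - Complex.I • Γ) * a * (1 + Complex.I • Γ)) := by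
  simp only [etaInv, evenPart, oddPart, mul_add, add_mul, mul_sub, sub_mul, one_mul, mul_one,
    smul_mul_assoc, mul_smul_comm, smul_smul, smul_add, smul_sub, Complex.I_mul_I,
    neg_smul, one_smul, sub_neg_eq_add]
  have h : Γ * (Γ * a * Γ) = a * Γ := by
    rw [← mul_assoc, ← mul_assoc, hunit, one_mul]
  rw [h]
  module

/-- For a self-adjoint unitary `Γ` on a Hilbert space `H`, the twist map
`η_Γ(a) = a₊ + iΓa₋` is a `*`-automorphism of `B(H)`, with inverse `a ↦ a₊ - iΓa₋`. -/
theorem eta_starAutomorphism {H : Type*} [NormedAddCommGroup H] [InnerProductSpace ℂ H]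
    [CompleteSpace H] (Γ : H →L[ℂ] H) (hsa : star Γ = Γ) (hunit : Γ * Γ = 1) :
    (∀ a b : H →L[ℂ] H, eta Γ (a + b) = eta Γ a + eta Γ b) ∧
    (∀ (c : ℂ) (a : H →L[ℂ] H), eta Γ (c • a) = c • eta Γ a) ∧
    (∀ a b : H →L[ℂ] H, eta Γ (a * b) = eta Γ a * eta Γ b) ∧
    (∀ a : H →L[ℂ] H, eta Γ (star a) = star (eta Γ a)) ∧
    (∀ a : H →L[ℂ] H, etaInv Γ (eta Γ a) = a) ∧
    (∀ a : H →L[ℂ] H, eta Γ (etaInv Γ a) = a) := by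
  have hvu0 : (1 - Complex.I • Γ) * (1 + Complex.I • Γ) = (2:ℂ) • (1 : H →L[ℂ] H) := by
    simp only [mul_add, add_mul, sub_mul, mul_sub, one_mul, mul_one, smul_mul_assoc,
      mul_smul_comm, smul_smul, Complex.I_mul_I, neg_smul, one_smul, hunit]
    match_scalars <;> simp [Complex.I_sq] <;> ring
  have huv0 : (1 + Complex.I • Γ) * (1 - Complex.I • Γ) = (2:ℂ) • (1 : H →L[ℂ] H) := by
    simp only [mul_add, add_mul, sub_mul, mul_sub, one_mul, mul_one, smul_mul_assoc,
      mul_smul_comm, smul_smul, Complex.I_mul_I, neg_smul, one_smul, hunit]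
    match_scalars <;> simp [Complex.I_sq] <;> ring
  have hvu : ∀ x : H →L[ℂ] H, (1 - Complex.I • Γ) * ((1 + Complex.I • Γ) * x) = (2:ℂ) • x :=
    fun x => by rw [← mul_assoc, hvu0, smul_mul_assoc, one_mul]
  have huv : ∀ x : H →L[ℂ] H, (1 + Complex.I • Γ) * ((1 - Complex.I • Γ) * x) = (2:ℂ) • x :=
    fun x => by rw [← mul_assoc, huv0, smul_mul_assoc, one_mul]
  refine ⟨?_, ?_, ?_, ?_, ?_, ?_⟩
  · intro a b
    simp only [eta_eq Γ hunit, mul_add, add_mul, smul_add]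
  · intro c a
    simp only [eta_eq Γ hunit, mul_smul_comm, smul_mul_assoc, smul_smul, mul_comm]
  · intro a b
    simp only [eta_eq Γ hunit, smul_mul_smul_comm]
    simp only [mul_assoc, hvu, huv, hvu0, huv0, mul_smul_comm, mul_one, smul_smul]
    norm_num
  · intro a
    have hsu : star (1 + Complex.I • Γ) = (1 - Complex.I • Γ : H →L[ℂ] H) := by
      simp [star_add, star_smul, Complex.star_def, Complex.conj_I, hsa, sub_eq_add_neg]
    have hsv : star (1 - Complex.I • Γ) = (1 + Complex.I • Γ : H →L[ℂ] H) := by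
      simp [star_sub, star_smul, Complex.star_def, Complex.conj_I, hsa]
    simp only [eta_eq Γ hunit, star_smul, star_mul, hsu, hsv, Complex.star_def,
      map_inv₀, Complex.conj_ofNat, mul_assoc]
  · intro a
    simp only [eta_eq Γ hunit, etaInv_eq Γ hunit, mul_smul_comm, smul_mul_assoc, smul_smul]
    simp only [mul_assoc, hvu, huv, smul_mul_assoc, hvu0, huv0, mul_smul_comm, mul_one,
      smul_smul]
    norm_num
  · intro a
    simp only [eta_eq Γ hunit, etaInv_eq Γ hunit, mul_smul_comm, smul_mul_assoc, smul_smul]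
    simp only [mul_assoc, hvu, huv, smul_mul_assoc, hvu0, huv0, mul_smul_comm, mul_one,
      smul_smul]
    norm_num
end

section
/- Let A and B be ℤ₂-graded *-algebras with states ω on A and φ on B, and suppose ω is even (ω ∘ α = ω for the grading automorphism α of A). Then the product functional ω × φ on the Fermi tensor product A ⊛ B, defined by (ω × φ)(Σ aⱼ ⊛ bⱼ) = Σ ω(aⱼ)φ(bⱼ), is positive: (ω × φ)(c*c) ≥ 0 for all c ∈ A ⊛ B, where * is the Fermi involution. -/
open scoped TensorProduct ComplexOrder

/-- `a` is homogeneous of parity `s` (`s = true` meaning odd) with respect to the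
grading automorphism `θ`. -/
def IsHomog {A : Type*} [Neg A] (θ : A → A) (a : A) (s : Bool) : Prop :=
  θ a = if s then -a else a

/-- The sign `ε`: `-1` if both arguments are odd, `1` otherwise. -/
def fermiSign (s t : Bool) : ℂ := if s && t then -1 else 1

lemma state_star_comm {A : Type*} [Ring A] [StarRing A] [Algebra ℂ A] [StarModule ℂ A]
    (φ : A →ₗ[ℂ] ℂ) (hpos : ∀ a, 0 ≤ φ (star a * a)) (x y : A) :
    φ (star y * x) = starRingEnd ℂ (φ (star x * y)) := by
  have him : ∀ a, (φ (star a * a)).im = 0 := fun a => ((Complex.nonneg_iff.mp (hpos a)).2).symm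
  have e1 : φ (star (x + y) * (x + y))
      = φ (star x * x) + φ (star x * y) + φ (star y * x) + φ (star y * y) := by
    rw [star_add, add_mul, mul_add, mul_add]
    simp only [map_add]; ring
  have e2 : φ (star (x + Complex.I • y) * (x + Complex.I • y))
      = φ (star x * x) + Complex.I * φ (star x * y)
        - Complex.I * φ (star y * x) + φ (star y * y) := by
    have hs : star (Complex.I • y) = (-Complex.I) • star y := by
      rw [star_smul]; simp [Complex.star_def]
    rw [star_add, hs, add_mul, mul_add, mul_add, smul_mul_assoc, smul_mul_assoc,
      mul_smul_comm, mul_smul_comm, smul_smul]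
    simp only [map_add, map_smul, smul_eq_mul, neg_mul, Complex.I_mul_I, neg_neg, one_smul]
    ring
  have h1 := him (x + y)
  have h2 := him (x + Complex.I • y)
  rw [e1] at h1
  rw [e2] at h2
  simp only [Complex.add_im, Complex.sub_im, Complex.mul_im, Complex.I_re, Complex.I_im,
    him x, him y] at h1 h2
  apply Complex.ext <;> simp [Complex.conj_re, Complex.conj_im] <;> linarith

lemma quad_expand {A : Type*} [Ring A] [StarRing A] [Algebra ℂ A] [StarModule ℂ A]
    (ω : A →ₗ[ℂ] ℂ) {n : ℕ} (x : Fin n → ℂ) (a : Fin n → A) :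
    ω (star (∑ i, x i • a i) * ∑ j, x j • a j)
      = ∑ i, ∑ j, starRingEnd ℂ (x i) * x j * ω (star (a i) * a j) := by
  rw [star_sum, Finset.sum_mul]
  simp only [Finset.mul_sum, star_smul, smul_mul_assoc, mul_smul_comm, smul_smul,
    map_sum, map_smul, smul_eq_mul, Complex.star_def]
  exact Finset.sum_congr rfl fun i _ => Finset.sum_congr rfl fun j _ => by ring

lemma sum_prod_nonneg {A B : Type*} [Ring A] [StarRing A] [Algebra ℂ A] [StarModule ℂ A]
    [Ring B] [StarRing B] [Algebra ℂ B] [StarModule ℂ B]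
    (ω : A →ₗ[ℂ] ℂ) (φ : B →ₗ[ℂ] ℂ)
    (hωpos : ∀ a : A, 0 ≤ ω (star a * a)) (hφpos : ∀ b : B, 0 ≤ φ (star b * b))
    {n : ℕ} (a : Fin n → A) (b : Fin n → B) :
    0 ≤ ∑ i, ∑ j, ω (star (a i) * a j) * φ (star (b i) * b j) := by
  set N : Matrix (Fin n) (Fin n) ℂ := Matrix.of fun i j => φ (star (b i) * b j) with hNdef
  have hN : N.PosSemidef := by
    rw [Matrix.posSemidef_iff_dotProduct_mulVec]
    constructor
    · ext i j
      simp only [Matrix.conjTranspose_apply, hNdef, Matrix.of_apply]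
      exact (state_star_comm φ hφpos (b j) (b i)).symm
    · intro x
      have : dotProduct (star x) (N.mulVec x) = ∑ i, ∑ j, starRingEnd ℂ (x i) * x j * φ (star (b i) * b j) := by
        simp only [dotProduct, Matrix.mulVec, dotProduct, Pi.star_apply,
          Finset.mul_sum, hNdef, Matrix.of_apply, Complex.star_def]
        refine Finset.sum_congr rfl fun i _ => Finset.sum_congr rfl fun j _ => by ring
      rw [this, ← quad_expand]
      exact hφpos _
  obtain ⟨C, hC⟩ : ∃ C : Matrix (Fin n) (Fin n) ℂ, N = C.conjTranspose * C := by
    open scoped MatrixOrder Matrix.Norms.L2Operator in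
    obtain ⟨B, hB⟩ := CStarAlgebra.nonneg_iff_eq_star_mul_self.mp hN.nonneg
    exact ⟨B, by rw [hB, Matrix.star_eq_conjTranspose]⟩
  have hNe : ∀ i j, φ (star (b i) * b j) = ∑ k, starRingEnd ℂ (C k i) * C k j := by
    intro i j
    have := congrFun (congrFun hC i) j
    simpa [Matrix.mul_apply, hNdef, Matrix.conjTranspose_apply, Complex.star_def] using this
  have key : ∀ (f : Fin n → Fin n → Fin n → ℂ),
      ∑ i, ∑ j, ∑ k, f i j k = ∑ k, ∑ i, ∑ j, f i j k := by
    intro f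
    calc ∑ i, ∑ j, ∑ k, f i j k = ∑ i, ∑ k, ∑ j, f i j k :=
          Finset.sum_congr rfl fun i _ => Finset.sum_comm
      _ = ∑ k, ∑ i, ∑ j, f i j k := Finset.sum_comm
  have e : ∑ i, ∑ j, ω (star (a i) * a j) * φ (star (b i) * b j)
      = ∑ k, ω (star (∑ i, C k i • a i) * ∑ j, C k j • a j) := by
    simp only [quad_expand ω]
    rw [← key fun i j k => starRingEnd ℂ (C k i) * C k j * ω (star (a i) * a j)]
    exact Finset.sum_congr rfl fun i _ => Finset.sum_congr rfl fun j _ => by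
      rw [hNe i j, Finset.mul_sum]
      exact Finset.sum_congr rfl fun k _ => by ring
  rw [e]
  exact Finset.sum_nonneg fun k _ => hωpos _
lemma homog_decomp {A : Type*} [Ring A] [Algebra ℂ A] (θ : A →ₐ[ℂ] A)
    (hinv : ∀ a, θ (θ a) = a) (a : A) :
    ∃ ap am : A, IsHomog θ ap false ∧ IsHomog θ am true ∧ a = ap + am := by
  refine ⟨(2⁻¹ : ℂ) • (a + θ a), (2⁻¹ : ℂ) • (a - θ a), ?_, ?_, ?_⟩
  · simp only [IsHomog, if_neg Bool.false_ne_true, map_smul, map_add, hinv]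
    rw [add_comm]
  · simp [IsHomog, map_smul, map_sub, hinv, ← smul_neg, neg_sub]
  · rw [← smul_add]
    rw [show a + θ a + (a - θ a) = (2:ℂ) • a by rw [two_smul]; abel, smul_smul]
    norm_num

lemma tensor_homog_decomp {A B : Type*} [Ring A] [Algebra ℂ A] [Ring B] [Algebra ℂ B]
    (θA : A →ₐ[ℂ] A) (θB : B →ₐ[ℂ] B)
    (hθAinv : ∀ a, θA (θA a) = a) (hθBinv : ∀ b, θB (θB b) = b) (c : A ⊗[ℂ] B) :
    ∃ (n : ℕ) (a : Fin n → A) (b : Fin n → B) (s t : Fin n → Bool),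
      (∀ i, IsHomog θA (a i) (s i)) ∧ (∀ i, IsHomog θB (b i) (t i)) ∧
      c = ∑ i, a i ⊗ₜ[ℂ] b i := by
  induction c using TensorProduct.induction_on with
  | zero =>
    exact ⟨0, Fin.elim0, Fin.elim0, Fin.elim0, Fin.elim0,
      fun i => i.elim0, fun i => i.elim0, by simp⟩
  | tmul a b =>
    obtain ⟨ap, am, hap, ham, hae⟩ := homog_decomp θA hθAinv a
    obtain ⟨bp, bm, hbp, hbm, hbe⟩ := homog_decomp θB hθBinv b
    refine ⟨4, ![ap, ap, am, am], ![bp, bm, bp, bm],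
      ![false, false, true, true], ![false, true, false, true], ?_, ?_, ?_⟩
    · intro i; fin_cases i <;> simpa
    · intro i; fin_cases i <;> simpa
    · rw [hae, hbe, Fin.sum_univ_four]
      simp only [Matrix.cons_val_zero, Matrix.cons_val_one, Matrix.head_cons,
        Matrix.cons_val_two, Matrix.tail_cons, Matrix.cons_val_three, Matrix.head_fin_const]
      rw [TensorProduct.add_tmul, TensorProduct.tmul_add, TensorProduct.tmul_add]
      abel
  | add x y ihx ihy =>
    obtain ⟨n, a, b, s, t, ha, hb, he⟩ := ihx
    obtain ⟨m, a', b', s', t', ha', hb', he'⟩ := ihy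
    refine ⟨n + m, Fin.append a a', Fin.append b b', Fin.append s s', Fin.append t t',
      ?_, ?_, ?_⟩
    · intro i
      refine Fin.addCases (fun i => ?_) (fun i => ?_) i <;>
        simp [Fin.append_left, Fin.append_right, ha, hb, ha', hb']
    · intro i
      refine Fin.addCases (fun i => ?_) (fun i => ?_) i <;>
        simp [Fin.append_left, Fin.append_right, ha, hb, ha', hb']
    · rw [he, he', Fin.sum_univ_add]
      simp [Fin.append_left, Fin.append_right]
/-- If `ω` is an even state on the `ℤ₂`-graded `*`-algebra `A` and `φ` a state on `B`,
then the product functional `ω × φ` is positive on the Fermi tensor product `A ⊛ B`: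
`(ω × φ)(c* c) ≥ 0` for all `c`, where `*` is the Fermi involution. -/
theorem productState_positive
    {A B : Type*} [Ring A] [StarRing A] [Algebra ℂ A] [StarModule ℂ A]
    [Ring B] [StarRing B] [Algebra ℂ B] [StarModule ℂ B]
    (θA : A →ₐ[ℂ] A) (θB : B →ₐ[ℂ] B)
    (hθAstar : ∀ a, θA (star a) = star (θA a)) (hθBstar : ∀ b, θB (star b) = star (θB b))
    (hθAinv : ∀ a, θA (θA a) = a) (hθBinv : ∀ b, θB (θB b) = b)
    -- the Fermi product and involution on `A ⊗ B`
    (mul : (A ⊗[ℂ] B) →ₗ[ℂ] (A ⊗[ℂ] B) →ₗ[ℂ] (A ⊗[ℂ] B))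
    (st : (A ⊗[ℂ] B) → (A ⊗[ℂ] B))
    (hmul : ∀ (a a' : A) (b b' : B) (sa sb sa' sb' : Bool),
      IsHomog θA a sa → IsHomog θB b sb → IsHomog θA a' sa' → IsHomog θB b' sb' →
      mul (a ⊗ₜ[ℂ] b) (a' ⊗ₜ[ℂ] b') = fermiSign sb sa' • ((a * a') ⊗ₜ[ℂ] (b * b')))
    (hst : ∀ (a : A) (b : B) (sa sb : Bool), IsHomog θA a sa → IsHomog θB b sb →
      st (a ⊗ₜ[ℂ] b) = fermiSign sa sb • (star a ⊗ₜ[ℂ] star b))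
    (hstadd : ∀ x y : A ⊗[ℂ] B, st (x + y) = st x + st y)
    (hstsmul : ∀ (c : ℂ) (x : A ⊗[ℂ] B), st (c • x) = starRingEnd ℂ c • st x)
    -- the states
    (ω : A →ₗ[ℂ] ℂ) (φ : B →ₗ[ℂ] ℂ)
    (hωpos : ∀ a : A, 0 ≤ ω (star a * a)) (hφpos : ∀ b : B, 0 ≤ φ (star b * b))
    (hωone : ω 1 = 1) (hφone : φ 1 = 1)
    (hωeven : ∀ a : A, ω (θA a) = ω a) :
    ∀ c : A ⊗[ℂ] B,
      0 ≤ TensorProduct.lift ((LinearMap.mul ℂ ℂ).compl₁₂ ω φ) (mul (st c) c) := by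
  intro c
  obtain ⟨n, a, b, s, t, ha, hb, rfl⟩ := tensor_homog_decomp θA θB hθAinv hθBinv c
  set F := TensorProduct.lift ((LinearMap.mul ℂ ℂ).compl₁₂ ω φ) with hF
  have hFel : ∀ (x : A) (y : B), F (x ⊗ₜ[ℂ] y) = ω x * φ y := by
    intro x y
    simp [hF, TensorProduct.lift.tmul, LinearMap.compl₁₂_apply, LinearMap.mul_apply']
  have hstarA : ∀ i, IsHomog θA (star (a i)) (s i) := by
    intro i
    unfold IsHomog at *
    rw [hθAstar, ha i]
    cases s i <;> simp
  have hstarB : ∀ i, IsHomog θB (star (b i)) (t i) := by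
    intro i
    unfold IsHomog at *
    rw [hθBstar, hb i]
    cases t i <;> simp
  -- expand `st` of the sum
  have hstc : st (∑ i, a i ⊗ₜ[ℂ] b i)
      = ∑ i, fermiSign (s i) (t i) • (star (a i) ⊗ₜ[ℂ] star (b i)) := by
    have : st (∑ i, a i ⊗ₜ[ℂ] b i) = ∑ i, st (a i ⊗ₜ[ℂ] b i) :=
      map_sum (AddMonoidHom.mk' st hstadd) _ _
    rw [this]
    exact Finset.sum_congr rfl fun i _ => hst _ _ _ _ (ha i) (hb i)
  -- expand the product and apply the functional
  have hval : F (mul (st (∑ i, a i ⊗ₜ[ℂ] b i)) (∑ i, a i ⊗ₜ[ℂ] b i))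
      = ∑ i, ∑ j, ω (star (a i) * a j) * φ (star (b i) * b j) := by
    rw [hstc, map_sum]
    simp only [LinearMap.sum_apply, map_smul, LinearMap.smul_apply, map_sum]
    rw [Finset.sum_comm]
    refine Finset.sum_congr rfl fun i _ => Finset.sum_congr rfl fun j _ => ?_
    rw [hmul _ _ _ _ (s i) (t i) (s j) (t j) (hstarA i) (hstarB i) (ha j) (hb j),
      map_smul, hFel, smul_eq_mul, smul_eq_mul, ← mul_assoc]
    -- now kill the signs
    by_cases hss : s i = s j
    · have hsgn : fermiSign (s i) (t i) * fermiSign (t i) (s j) = 1 := by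
        rw [hss]; cases s j <;> cases t i <;> simp [fermiSign]
      rw [hsgn, one_mul]
    · have hodd : ω (star (a i) * a j) = 0 := by
        have hhom : θA (star (a i) * a j) = -(star (a i) * a j) := by
          rw [map_mul]
          rw [hstarA i, ha j]
          cases hsi : s i <;> cases hsj : s j <;>
            first
              | (exfalso; rw [hsi, hsj] at hss; exact hss rfl)
              | simp
        have heq := hωeven (star (a i) * a j)
        rw [hhom, map_neg] at heq
        linear_combination (-(1:ℂ)/2) * heq
      rw [hodd]
      ring
  rw [hval]
  exact sum_prod_nonneg ω φ hωpos hφpos a b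
end

section
/- With the notation of the twisted dual: if additionally Ψ is unital (Ψ(1) = 1), then μ^⁇ ∘ Ψ^⁇ = ν^⁇, where μ^⁇ and ν^⁇ are the restrictions of the vector states to the twisted commutants; moreover Ψ^⁇ is faithful when it is positive, i.e. Ψ^⁇(b*b) = 0 implies b = 0 for b ∈ N^⁇. -/
/-- The Klein transformation `κ_Γ(a) = a₊ + Γ a₋`. -/
noncomputable def klein {H : Type*} [NormedAddCommGroup H] [InnerProductSpace ℂ H]
    [CompleteSpace H] (Γ a : H →L[ℂ] H) : H →L[ℂ] H :=
  evenPart Γ a + Γ * oddPart Γ a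

section helpers

variable {H : Type*} [NormedAddCommGroup H] [InnerProductSpace ℂ H] [CompleteSpace H]
variable (Γ : H →L[ℂ] H)

lemma conjMul' (hunit : Γ * Γ = 1) (a b : H →L[ℂ] H) :
    Γ * (a * b) * Γ = (Γ * a * Γ) * (Γ * b * Γ) := by
  have h : ∀ c : H →L[ℂ] H, Γ * (Γ * c) = c := fun c => by
    rw [← mul_assoc, hunit, one_mul]
  simp only [mul_assoc, h]

lemma conj_even (hunit : Γ * Γ = 1) (x : H →L[ℂ] H) :
    Γ * evenPart Γ x * Γ = evenPart Γ x := by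
  have h : ∀ c : H →L[ℂ] H, Γ * (Γ * c) = c := fun c => by
    rw [← mul_assoc, hunit, one_mul]
  simp only [evenPart, mul_smul_comm, smul_mul_assoc, mul_add, add_mul, mul_assoc, h,
    mul_one, hunit]
  rw [add_comm]

lemma conj_odd (hunit : Γ * Γ = 1) (x : H →L[ℂ] H) :
    Γ * oddPart Γ x * Γ = - oddPart Γ x := by
  have h : ∀ c : H →L[ℂ] H, Γ * (Γ * c) = c := fun c => by
    rw [← mul_assoc, hunit, one_mul]
  simp only [oddPart, mul_smul_comm, smul_mul_assoc, mul_sub, sub_mul, mul_assoc, h,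
    mul_one, hunit, ← smul_neg, neg_sub]

lemma even_add_odd (x : H →L[ℂ] H) : evenPart Γ x + oddPart Γ x = x := by
  simp only [evenPart, oddPart, ← smul_add]
  have : x + Γ * x * Γ + (x - Γ * x * Γ) = (2 : ℂ) • x := by module
  rw [this, smul_smul]
  norm_num

lemma klein_PQ (hunit : Γ * Γ = 1) (P Q : H →L[ℂ] H)
    (hP : Γ * P * Γ = P) (hQ : Γ * Q * Γ = -Q) :
    klein Γ (P + Q) = P + Γ * Q := by
  have hα : Γ * (P + Q) * Γ = P - Q := by
    rw [mul_add, add_mul, hP, hQ, sub_eq_add_neg]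
  have he : evenPart Γ (P + Q) = P := by
    rw [evenPart, hα]
    have : P + Q + (P - Q) = (2 : ℂ) • P := by module
    rw [this, smul_smul]; norm_num
  have ho : oddPart Γ (P + Q) = Q := by
    rw [oddPart, hα]
    have : P + Q - (P - Q) = (2 : ℂ) • Q := by module
    rw [this, smul_smul]; norm_num
  rw [klein, he, ho]

lemma star_klein_mul (hsa : star Γ = Γ) (hunit : Γ * Γ = 1) (P Q : H →L[ℂ] H)
    (hP : Γ * P * Γ = P) (hQ : Γ * Q * Γ = -Q) :
    star (P + Γ * Q) * (P + Γ * Q)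
      = (star P * P + star Q * Q) + Γ * (star P * Q - star Q * P) := by
  have h : ∀ c : H →L[ℂ] H, Γ * (Γ * c) = c := fun c => by
    rw [← mul_assoc, hunit, one_mul]
  have hPc : Γ * P = P * Γ := by
    have := congrArg (· * Γ) hP
    simpa [mul_assoc, hunit] using this
  have hQc : Γ * Q = -(Q * Γ) := by
    have := congrArg (· * Γ) hQ
    simpa [mul_assoc, hunit] using this
  have hPsc : Γ * star P = star P * Γ := by
    have := congrArg star hPc
    rw [star_mul, star_mul, hsa] at this
    exact this.symm
  have hQsc : Γ * star Q = -(star Q * Γ) := by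
    have := congrArg star hQc
    rw [star_mul, star_neg, star_mul, hsa] at this
    rw [this, neg_neg]
  rw [star_add, star_mul, hsa]
  have e1 : star P * (Γ * Q) = Γ * (star P * Q) := by
    rw [← mul_assoc, ← hPsc, mul_assoc]
  have e2 : star Q * (Γ * P) = -(Γ * (star Q * P)) := by
    rw [← mul_assoc, show star Q * Γ = -(Γ * star Q) from by rw [hQsc, neg_neg], neg_mul,
      mul_assoc]
  have e3 : star Q * (Γ * (Γ * Q)) = star Q * Q := by
    rw [h]
  noncomm_ring [e1, e2, e3]

lemma conj_conj (hunit : Γ * Γ = 1) (a : H →L[ℂ] H) : Γ * (Γ * a * Γ) * Γ = a := by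
  have h : ∀ c : H →L[ℂ] H, Γ * (Γ * c) = c := fun c => by
    rw [← mul_assoc, hunit, one_mul]
  simp only [mul_assoc, h, hunit, mul_one]

end helpers

/-- If `Ψ` is unital, the twisted dual `Ψ^⁇` (characterized by
`⟨Ψ^⁇(b) a ξ_μ, ξ_μ⟩ = ⟨b Ψ(a) ξ_ν, ξ_ν⟩` on `N^⁇`) satisfies
`μ^⁇ ∘ Ψ^⁇ = ν^⁇`, and (being positive) is faithful: `Ψ^⁇(b* b) = 0 ⟹ b = 0`. -/
theorem twistedDual_statePreserving_faithful
    {Hμ Hν : Type*}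
    [NormedAddCommGroup Hμ] [InnerProductSpace ℂ Hμ] [CompleteSpace Hμ]
    [NormedAddCommGroup Hν] [InnerProductSpace ℂ Hν] [CompleteSpace Hν]
    (M : VonNeumannAlgebra Hμ) (N : VonNeumannAlgebra Hν)
    (Γμ : Hμ →L[ℂ] Hμ) (Γν : Hν →L[ℂ] Hν)
    (hμsa : star Γμ = Γμ) (hμunit : Γμ * Γμ = 1)
    (hνsa : star Γν = Γν) (hνunit : Γν * Γν = 1)
    (hMstab : ∀ a ∈ M, Γμ * a * Γμ ∈ M) (hNstab : ∀ b ∈ N, Γν * b * Γν ∈ N)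
    (ξμ : Hμ) (ξν : Hν) (hξμfix : Γμ ξμ = ξμ) (hξνfix : Γν ξν = ξν)
    (Ψ : (Hμ →L[ℂ] Hμ) →ₗ[ℂ] (Hν →L[ℂ] Hν))
    (hΨmem : ∀ a ∈ M, Ψ a ∈ N)
    (hΨone : Ψ 1 = 1)
    (Ψw : (Hν →L[ℂ] Hν) → (Hμ →L[ℂ] Hμ))
    (hΨwmem : ∀ b ∈ klein Γν '' (N.commutant : Set (Hν →L[ℂ] Hν)),
      Ψw b ∈ klein Γμ '' (M.commutant : Set (Hμ →L[ℂ] Hμ)))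
    (hΨwdual : ∀ a ∈ M, ∀ b ∈ klein Γν '' (N.commutant : Set (Hν →L[ℂ] Hν)),
      @inner ℂ Hμ _ ((Ψw b) (a ξμ)) ξμ = @inner ℂ Hν _ (b ((Ψ a) ξν)) ξν)
    (hΨwpos : ∀ b : Hν →L[ℂ] Hν, b.IsPositive → (Ψw b).IsPositive)
    (hsep : ∀ b ∈ klein Γν '' (N.commutant : Set (Hν →L[ℂ] Hν)), b ξν = 0 → b = 0) :
    (∀ b ∈ klein Γν '' (N.commutant : Set (Hν →L[ℂ] Hν)),
      @inner ℂ Hμ _ ((Ψw b) ξμ) ξμ = @inner ℂ Hν _ (b ξν) ξν) ∧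
    (∀ b ∈ klein Γν '' (N.commutant : Set (Hν →L[ℂ] Hν)),
      Ψw (star b * b) = 0 → b = 0) := by
  have part1 : ∀ b ∈ klein Γν '' (N.commutant : Set (Hν →L[ℂ] Hν)),
      @inner ℂ Hμ _ ((Ψw b) ξμ) ξμ = @inner ℂ Hν _ (b ξν) ξν := by
    intro b hb
    have := hΨwdual 1 (one_mem M) b hb
    simpa [hΨone] using this
  refine ⟨part1, ?_⟩
  rintro b ⟨x, hx, rfl⟩ hb0
  set b := klein Γν x with hbdef
  -- even and odd parts of x
  set P := evenPart Γν x with hPdef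
  set Q := oddPart Γν x with hQdef
  have hP : Γν * P * Γν = P := conj_even Γν hνunit x
  have hQ : Γν * Q * Γν = -Q := conj_odd Γν hνunit x
  -- commutant is stable under conjugation by Γν
  have hconjmem : ∀ y ∈ N.commutant, Γν * y * Γν ∈ N.commutant := by
    intro y hy
    rw [VonNeumannAlgebra.mem_commutant_iff]
    intro g hg
    have hcomm := VonNeumannAlgebra.mem_commutant_iff.mp hy _ (hNstab g hg)
    have key := congrArg (fun c => Γν * c * Γν) hcomm
    rw [conjMul' Γν hνunit, conj_conj Γν hνunit, conjMul' Γν hνunit,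
      conj_conj Γν hνunit] at key
    exact key
  have hPmem : P ∈ N.commutant := by
    rw [hPdef, evenPart]
    exact N.commutant.toStarSubalgebra.smul_mem (add_mem hx (hconjmem x hx)) _
  have hQmem : Q ∈ N.commutant := by
    rw [hQdef, oddPart]
    exact N.commutant.toStarSubalgebra.smul_mem (sub_mem hx (hconjmem x hx)) _
  -- conjugation of stars
  have hPs : Γν * star P * Γν = star P := by
    have := congrArg star hP
    rw [star_mul, star_mul, hνsa, ← mul_assoc] at this
    exact this
  have hQs : Γν * star Q * Γν = -(star Q) := by
    have := congrArg star hQ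
    rw [star_mul, star_mul, hνsa, ← mul_assoc, star_neg] at this
    exact this
  -- the preimage of star b * b under klein
  set A := star P * P + star Q * Q with hAdef
  set B := star P * Q - star Q * P with hBdef
  have hA : Γν * A * Γν = A := by
    rw [hAdef, mul_add, add_mul, conjMul' Γν hνunit, conjMul' Γν hνunit, hPs, hQs, hP, hQ]
    noncomm_ring
  have hB : Γν * B * Γν = -B := by
    rw [hBdef, mul_sub, sub_mul, conjMul' Γν hνunit, conjMul' Γν hνunit, hPs, hQs, hP, hQ]
    noncomm_ring
  have hzmem : A + B ∈ N.commutant := by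
    refine add_mem (add_mem ?_ ?_) (sub_mem ?_ ?_) <;>
      exact mul_mem (star_mem ‹_›) ‹_›
  have hkz : klein Γν (A + B) = star b * b := by
    rw [klein_PQ Γν hνunit A B hA hB]
    have hbPQ : b = P + Γν * Q := rfl
    rw [hbPQ, star_klein_mul Γν hνsa hνunit P Q hP hQ]
  have hmemS : star b * b ∈ klein Γν '' (N.commutant : Set (Hν →L[ℂ] Hν)) :=
    ⟨A + B, hzmem, hkz⟩
  have h0 : @inner ℂ Hν _ ((star b * b) ξν) ξν = 0 := by
    rw [← part1 _ hmemS, hb0]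
    simp
  have hbξ : b ξν = 0 := by
    rw [ContinuousLinearMap.mul_apply, ContinuousLinearMap.star_eq_adjoint,
      ContinuousLinearMap.adjoint_inner_left] at h0
    exact inner_self_eq_zero.mp h0
  exact hsep b ⟨x, hx, rfl⟩ hbξ
end
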